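/- For all n and all r ≥ 1, the number of inversion sequences of length n avoiding the consecutive increasing pattern 01...r (r+1 strictly increasing consecutive entries) equals the number of permutations of {1,...,n} with no r+1 consecutive strictly decreasing entries. -/

import Mathlib

def IsInvSeq {n : ℕ} (e : Fin n → Fin n) : Prop := ∀ i : Fin n, (e i : ℕ) ≤ (i : ℕ)

def extSeq {n : ℕ} (e : Fin n → Fin n) : ℕ → ℕ := fun i => if h : i < n then (e ⟨i, h⟩ : ℕ) else 0

/-- `f` contains `r+1` adjacent strictly increasing entries (the pattern `01…r`). -/
def ContainsInc (r n : ℕ) (f : ℕ → ℕ) : Prop :=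
  ∃ i : ℕ, i + r < n ∧ ∀ j < r, f (i + j) < f (i + j + 1)

/-- `f` contains `r+1` adjacent strictly decreasing entries (the pattern `(r+1)r…1`). -/
def ContainsDec (r n : ℕ) (f : ℕ → ℕ) : Prop :=
  ∃ i : ℕ, i + r < n ∧ ∀ j < r, f (i + j + 1) < f (i + j)

open Finset

private def thetaCard {n : ℕ} (π : Equiv.Perm (Fin n)) (i : Fin n) : ℕ :=
  (univ.filter (fun j => j < i ∧ π i < π j)).card

private lemma thetaCard_le {n : ℕ} (π : Equiv.Perm (Fin n)) (i : Fin n) :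
    thetaCard π i ≤ (i : ℕ) := by
  have h1 : (univ.filter (fun j => j < i ∧ π i < π j)) ⊆ Finset.Iio i := by
    intro j hj
    simp only [mem_filter] at hj
    simpa using hj.2.1
  simpa [thetaCard, Fin.card_Iio] using card_le_card h1

private def thetaFun {n : ℕ} (π : Equiv.Perm (Fin n)) (i : Fin n) : Fin n :=
  ⟨thetaCard π i, lt_of_le_of_lt (thetaCard_le π i) i.isLt⟩

private lemma theta_isInvSeq {n : ℕ} (π : Equiv.Perm (Fin n)) : IsInvSeq (thetaFun π) :=
  fun i => thetaCard_le π i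

private lemma theta_step {n : ℕ} (π : Equiv.Perm (Fin n)) (a b : Fin n)
    (hab : (a : ℕ) + 1 = (b : ℕ)) :
    ((π b : ℕ) < (π a : ℕ)) ↔ thetaCard π a < thetaCard π b := by
  have hab' : a < b := by rw [Fin.lt_def]; omega
  have hne : a ≠ b := ne_of_lt hab'
  constructor
  · intro h
    have h' : π b < π a := h
    have hsub : insert a (univ.filter (fun j => j < a ∧ π a < π j)) ⊆
        univ.filter (fun j => j < b ∧ π b < π j) := by
      intro j hj
      rcases mem_insert.mp hj with rfl | hj
      · simp [hab', h']
      · simp only [mem_filter] at hj ⊢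
        exact ⟨by simp, lt_trans hj.2.1 hab', lt_trans h' hj.2.2⟩
    have hnm : a ∉ univ.filter (fun j => j < a ∧ π a < π j) := by simp
    have := card_le_card hsub
    rw [card_insert_of_notMem hnm] at this
    exact lt_of_lt_of_le (Nat.lt_succ_self _) this
  · intro h
    by_contra hc
    push_neg at hc
    have hlt : π a < π b := by
      rcases lt_or_eq_of_le hc with h1 | h1
      · exact h1
      · exact absurd (π.injective (Fin.val_injective h1)) hne
    have hsub : univ.filter (fun j => j < b ∧ π b < π j) ⊆
        univ.filter (fun j => j < a ∧ π a < π j) := by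
      intro j hj
      simp only [mem_filter] at hj ⊢
      have hja : j < a ∨ j = a := by
        rcases hj.2.1 with h2
        rw [Fin.lt_def] at h2 ⊢
        rcases Nat.lt_or_ge (j : ℕ) (a : ℕ) with h3 | h3
        · exact Or.inl h3
        · exact Or.inr (Fin.ext (by omega))
      rcases hja with hja | rfl
      · exact ⟨by simp, hja, lt_trans hlt hj.2.2⟩
      · exact absurd hj.2.2 (not_lt.mpr (le_of_lt hlt))
    exact absurd (card_le_card hsub) (not_le.mpr h)

private lemma theta_count_eq {n : ℕ} (π : Equiv.Perm (Fin n)) (i : Fin n) :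
    thetaCard π i + (univ.filter (fun j => i < j ∧ π i < π j)).card
      + (π i : ℕ) + 1 = n := by
  have hsplit : univ.filter (fun j => π i < π j) =
      univ.filter (fun j => j < i ∧ π i < π j) ∪ univ.filter (fun j => i < j ∧ π i < π j) := by
    ext j
    simp only [mem_filter, mem_union, mem_univ, true_and]
    constructor
    · intro h
      rcases lt_trichotomy j i with h1 | rfl | h1
      · exact Or.inl ⟨h1, h⟩
      · exact absurd h (lt_irrefl _)
      · exact Or.inr ⟨h1, h⟩
    · rintro (⟨_, h⟩ | ⟨_, h⟩) <;> exact h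
  have hdisj : Disjoint (univ.filter (fun j => j < i ∧ π i < π j))
      (univ.filter (fun j => i < j ∧ π i < π j)) := by
    rw [Finset.disjoint_left]
    intro j h1 h2
    simp only [mem_filter] at h1 h2
    exact absurd (lt_trans h1.2.1 h2.2.1) (lt_irrefl _)
  have hfull : (univ.filter (fun j => π i < π j)) = (Ioi (π i)).map π.symm.toEmbedding := by
    ext j
    simp only [mem_filter, mem_univ, true_and, mem_map, mem_Ioi, Equiv.coe_toEmbedding]
    constructor
    · intro h; exact ⟨π j, h, π.symm_apply_apply j⟩
    · rintro ⟨a, ha, rfl⟩; simpa using ha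
  have hcardfull : (univ.filter (fun j => π i < π j)).card = n - 1 - (π i : ℕ) := by
    rw [hfull, card_map, Fin.card_Ioi]
  have hsum := card_union_of_disjoint hdisj
  rw [← hsplit, hcardfull] at hsum
  have hπi : (π i : ℕ) < n := (π i).isLt
  unfold thetaCard
  omega

private lemma theta_key {n : ℕ} (π σ : Equiv.Perm (Fin n)) (i : Fin n)
    (htail : ∀ j, i < j → π j = σ j)
    (hcard : thetaCard π i = thetaCard σ i)
    (hlt : (π i : ℕ) < (σ i : ℕ)) : False := by
  have h1 := theta_count_eq π i
  have h2 := theta_count_eq σ i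
  set Aπ := univ.filter (fun j => i < j ∧ π i < π j) with hAπ
  set Aσ := univ.filter (fun j => i < j ∧ σ i < σ j) with hAσ
  have hAσ' : Aσ = univ.filter (fun j => i < j ∧ σ i < π j) := by
    rw [hAσ]
    apply filter_congr
    intro j _
    constructor
    · rintro ⟨h3, h4⟩; exact ⟨h3, by rwa [htail j h3]⟩
    · rintro ⟨h3, h4⟩; exact ⟨h3, by rwa [← htail j h3]⟩
  have hsub : Aσ ⊆ Aπ := by
    rw [hAσ', hAπ]
    intro j hj
    simp only [mem_filter] at hj ⊢
    refine ⟨by simp, hj.2.1, lt_trans ?_ hj.2.2⟩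
    exact hlt
  set D := Aπ \ Aσ with hD
  have hDcard : D.card = Aπ.card - Aσ.card := card_sdiff_of_subset hsub
  have hDsub : D.image π ⊆ Ioo (π i) (σ i) := by
    intro v hv
    simp only [mem_image] at hv
    obtain ⟨j, hj, rfl⟩ := hv
    rw [hD, mem_sdiff, hAπ, hAσ'] at hj
    simp only [mem_filter, mem_univ, true_and, not_and, not_lt] at hj
    obtain ⟨⟨hij, hπj⟩, hns⟩ := hj
    have hle : π j ≤ σ i := hns hij
    have hne : π j ≠ σ i := by
      intro he
      have : σ j = σ i := by rw [← htail j hij, he]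
      exact absurd (σ.injective this) (ne_of_gt hij)
    exact mem_Ioo.mpr ⟨hπj, lt_of_le_of_ne hle hne⟩
  have himg : (D.image π).card = D.card := card_image_of_injective D π.injective
  have hIoo : (Ioo (π i) (σ i)).card = (σ i : ℕ) - (π i : ℕ) - 1 := Fin.card_Ioo _ _
  have hle2 : D.card ≤ (σ i : ℕ) - (π i : ℕ) - 1 := by
    rw [← himg, ← hIoo]; exact card_le_card hDsub
  have hAle : Aσ.card ≤ Aπ.card := card_le_card hsub
  omega

private lemma theta_inj {n : ℕ} : Function.Injective (thetaFun (n := n)) := by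
  intro π σ h
  by_contra hne
  have hs : (univ.filter (fun i => π i ≠ σ i)).Nonempty := by
    by_contra hs
    rw [Finset.not_nonempty_iff_eq_empty, Finset.filter_eq_empty_iff] at hs
    apply hne
    ext x
    have := hs (mem_univ x)
    simp only [ne_eq, not_not] at this
    exact congrArg Fin.val this
  set i := (univ.filter (fun i => π i ≠ σ i)).max' hs with hi
  have hmem := (univ.filter (fun i => π i ≠ σ i)).max'_mem hs
  rw [← hi, mem_filter] at hmem
  have htail : ∀ j, i < j → π j = σ j := by
    intro j hj
    by_contra hd
    have : j ≤ i := Finset.le_max' _ j (by simp [hd])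
    exact absurd hj (not_lt.mpr this)
  have hcard : thetaCard π i = thetaCard σ i := by
    have := congrFun h i
    simpa [thetaFun, Fin.ext_iff] using this
  rcases lt_trichotomy ((π i : ℕ)) ((σ i : ℕ)) with h1 | h1 | h1
  · exact theta_key π σ i htail hcard h1
  · exact hmem.2 (Fin.ext h1)
  · exact theta_key σ π i (fun j hj => (htail j hj).symm) hcard.symm h1

private def invSeqEquivPi {n : ℕ} :
    {e : Fin n → Fin n // IsInvSeq e} ≃ (∀ i : Fin n, Fin ((i : ℕ) + 1)) where
  toFun := fun e i => ⟨e.1 i, Nat.lt_succ_of_le (e.2 i)⟩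
  invFun := fun f => ⟨fun i => ⟨(f i : ℕ), lt_of_le_of_lt (Nat.le_of_lt_succ (f i).isLt) i.isLt⟩,
    fun i => Nat.le_of_lt_succ (f i).isLt⟩
  left_inv := fun e => by ext i; rfl
  right_inv := fun f => by ext i; rfl

private instance instFintypeInvSeq {n : ℕ} : Fintype {e : Fin n → Fin n // IsInvSeq e} :=
  Fintype.ofEquiv _ invSeqEquivPi.symm

private lemma card_invSeq {n : ℕ} :
    Fintype.card {e : Fin n → Fin n // IsInvSeq e} = Fintype.card (Equiv.Perm (Fin n)) := by
  rw [Fintype.card_congr invSeqEquivPi, Fintype.card_pi, Fintype.card_perm, Fintype.card_fin]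
  simp only [Fintype.card_fin]
  rw [Fin.prod_univ_eq_prod_range (fun i => i + 1) n]
  exact Finset.prod_range_add_one_eq_factorial n

private noncomputable def Theta {n : ℕ} : Equiv.Perm (Fin n) ≃ {e : Fin n → Fin n // IsInvSeq e} :=
  Equiv.ofBijective (fun π => ⟨thetaFun π, theta_isInvSeq π⟩)
    ((Fintype.bijective_iff_injective_and_card _).mpr
      ⟨fun π σ h => theta_inj (congrArg Subtype.val h), card_invSeq.symm⟩)

private lemma dec_iff_inc {n r : ℕ} (π : Equiv.Perm (Fin n)) :
    ContainsDec r n (extSeq ⇑π) ↔ ContainsInc r n (extSeq (thetaFun π)) := by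
  constructor
  · rintro ⟨i, hi, hj⟩
    refine ⟨i, hi, fun j hjr => ?_⟩
    have h0 : i + j < n := by omega
    have h1 : i + j + 1 < n := by omega
    have := hj j hjr
    rw [extSeq, extSeq] at this ⊢
    simp only [dif_pos h0, dif_pos h1] at this ⊢
    exact (theta_step π ⟨i + j, h0⟩ ⟨i + j + 1, h1⟩ rfl).mp this
  · rintro ⟨i, hi, hj⟩
    refine ⟨i, hi, fun j hjr => ?_⟩
    have h0 : i + j < n := by omega
    have h1 : i + j + 1 < n := by omega
    have := hj j hjr
    rw [extSeq, extSeq] at this ⊢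
    simp only [dif_pos h0, dif_pos h1] at this ⊢
    exact (theta_step π ⟨i + j, h0⟩ ⟨i + j + 1, h1⟩ rfl).mpr this

theorem stmt11 (n r : ℕ) (hr : 1 ≤ r) :
    Nat.card {e : Fin n → Fin n // IsInvSeq e ∧ ¬ ContainsInc r n (extSeq e)} =
    Nat.card {π : Equiv.Perm (Fin n) // ¬ ContainsDec r n (extSeq (⇑π))} := by
  refine (Nat.card_congr ?_).symm
  have e1 : {π : Equiv.Perm (Fin n) // ¬ ContainsDec r n (extSeq (⇑π))} ≃
      {x : {e : Fin n → Fin n // IsInvSeq e} // ¬ ContainsInc r n (extSeq x.1)} :=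
    (Theta).subtypeEquiv (fun π => not_congr (by exact dec_iff_inc π))
  exact e1.trans (Equiv.subtypeSubtypeEquivSubtypeInter (IsInvSeq) (fun e => ¬ ContainsInc r n (extSeq e)))
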